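/- Let n ≥ 2 and let V, η ∈ ℝⁿ be orthonormal (‖V‖ = ‖η‖ = 1, ⟪V,η⟫ = 0). Define g : ℝⁿ → ℝ by g(p) = 2^{−1/3}(‖p‖^{4/3} − 4‖p‖^{−2/3}⟪p,V⟫²) for p ≠ 0, and set p := (1/2)V + (√3/2)η. Then the second derivative of g at p evaluated at (η, η) equals 0. (Hence the cost c(x,y) = ‖x−y‖⁻² does not satisfy the strict condition (MTW₊): there exist p ≠ 0 and orthogonal unit vectors V, η for which the MTW quantity vanishes.) -/

import Mathlib

open RealInnerProductSpace Real

section MTWAux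

variable {F : Type*} [NormedAddCommGroup F] [InnerProductSpace ℝ F]

/-- The bundled real inner product as a continuous bilinear map. -/
noncomputable def mtwInnerSL : F →L[ℝ] F →L[ℝ] ℝ := innerSL ℝ

@[simp] lemma mtwInnerSL_apply (v w : F) : mtwInnerSL v w = ⟪v, w⟫ := rfl

lemma mtw_hasFDerivAt_inner_self (q : F) :
    HasFDerivAt (fun x : F => ⟪x, x⟫) ((2 : ℝ) • mtwInnerSL q) q := by
  have h := (hasFDerivAt_id q).inner ℝ (hasFDerivAt_id q)
  refine h.congr_fderiv ?_
  ext w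
  simp only [ContinuousLinearMap.smul_apply, mtwInnerSL_apply, smul_eq_mul,
    ContinuousLinearMap.comp_apply, ContinuousLinearMap.prod_apply,
    ContinuousLinearMap.coe_id', id_eq, fderivInnerCLM_apply]
  rw [real_inner_comm w q]
  ring

lemma mtw_hasFDerivAt_inner_right (v q : F) :
    HasFDerivAt (fun x : F => ⟪x, v⟫) (mtwInnerSL v) q := by
  have h : (fun x : F => ⟪x, v⟫) = fun x => mtwInnerSL v x := by
    funext x
    simp [real_inner_comm]
  rw [h]
  exact (mtwInnerSL v).hasFDerivAt

/-- The extension of `g` to a smooth formula in terms of inner products. -/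
noncomputable def mtwG (V : F) : F → ℝ := fun q =>
  (2 : ℝ) ^ (-(1 / 3 : ℝ)) *
    (⟪q, q⟫ ^ ((2 : ℝ) / 3) - 4 * ⟪q, q⟫ ^ (-(1 / 3 : ℝ)) * ⟪q, V⟫ ^ 2)

noncomputable def mtwAlpha (V : F) : F → ℝ := fun q =>
  (2 : ℝ) ^ (-(1 / 3 : ℝ)) *
    ((4 / 3) * ⟪q, q⟫ ^ (-(1 / 3 : ℝ)) + (8 / 3) * ⟪q, q⟫ ^ (-(4 / 3 : ℝ)) * ⟪q, V⟫ ^ 2)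

noncomputable def mtwBeta (V : F) : F → ℝ := fun q =>
  (2 : ℝ) ^ (-(1 / 3 : ℝ)) * (-8 * ⟪q, q⟫ ^ (-(1 / 3 : ℝ)) * ⟪q, V⟫)

/-- The first derivative of `mtwG`. -/
noncomputable def mtwA (V : F) : F → (F →L[ℝ] ℝ) := fun q =>
  mtwAlpha V q • mtwInnerSL q + mtwBeta V q • mtwInnerSL V

lemma mtwG_hasFDerivAt (V q : F) (hq : ⟪q, q⟫ ≠ (0 : ℝ)) :
    HasFDerivAt (mtwG V) (mtwA V q) q := by
  have hs := mtw_hasFDerivAt_inner_self q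
  have ht := mtw_hasFDerivAt_inner_right V q
  have h1 : HasFDerivAt (fun x : F => ⟪x, x⟫ ^ ((2 : ℝ) / 3))
      ((((2 : ℝ) / 3) * ⟪q, q⟫ ^ ((2 : ℝ) / 3 - 1)) • ((2 : ℝ) • mtwInnerSL q)) q :=
    hs.rpow_const (Or.inl hq)
  have h2 : HasFDerivAt (fun x : F => ⟪x, x⟫ ^ (-(1 / 3 : ℝ)))
      (((-(1 / 3 : ℝ)) * ⟪q, q⟫ ^ (-(1 / 3 : ℝ) - 1)) • ((2 : ℝ) • mtwInnerSL q)) q :=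
    hs.rpow_const (Or.inl hq)
  have h3 : HasFDerivAt (fun x : F => ⟪x, V⟫ ^ 2)
      (⟪q, V⟫ • mtwInnerSL V + ⟪q, V⟫ • mtwInnerSL V) q := by
    simpa only [pow_two] using ht.fun_mul ht
  have h := ((h1.sub ((h2.const_mul (4 : ℝ)).fun_mul h3)).const_mul ((2 : ℝ) ^ (-(1 / 3 : ℝ))))
  have e1 : ((2 : ℝ) / 3 - 1) = -(1 / 3 : ℝ) := by norm_num
  have e2 : (-(1 / 3 : ℝ) - 1) = -(4 / 3 : ℝ) := by norm_num
  rw [e1, e2] at h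
  refine h.congr_fderiv (Eq.symm ?_)
  ext w
  simp only [mtwA, ContinuousLinearMap.add_apply, ContinuousLinearMap.smul_apply,
    ContinuousLinearMap.sub_apply, mtwInnerSL_apply, smul_eq_mul, mtwAlpha, mtwBeta,
    Nat.cast_ofNat, pow_one]
  ring

end MTWAux

/-- Failure of the strict condition (MTW₊) for the cost `c(x,y) = ‖x − y‖⁻²`: for
orthonormal `V, η` and `g(p) = 2^{−1/3}(‖p‖^{4/3} − 4‖p‖^{−2/3}⟪p,V⟫²)` (defined for
`p ≠ 0`), the second derivative of `g` at `p = (1/2)V + (√3/2)η` evaluated at `(η, η)`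
equals `0`. -/
theorem MTW_plus_fails_inv_square_cost
    (n : ℕ) (hn : 2 ≤ n) (V η : EuclideanSpace ℝ (Fin n))
    (hV : ‖V‖ = 1) (hη : ‖η‖ = 1) (horth : ⟪V, η⟫ = 0)
    (g : EuclideanSpace ℝ (Fin n) → ℝ)
    (hg : ∀ q : EuclideanSpace ℝ (Fin n), q ≠ 0 →
      g q = (2 : ℝ) ^ (-(1 / 3 : ℝ)) *
        (‖q‖ ^ ((4 : ℝ) / 3) - 4 * ‖q‖ ^ (-(2 / 3 : ℝ)) * ⟪q, V⟫ ^ 2))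
    (p : EuclideanSpace ℝ (Fin n))
    (hp : p = (1 / 2 : ℝ) • V + (Real.sqrt 3 / 2) • η) :
    fderiv ℝ (fun q => fderiv ℝ g q) p η η = 0 := by
  classical
  have sqrt3 : Real.sqrt 3 * Real.sqrt 3 = 3 := Real.mul_self_sqrt (by norm_num)
  have hVV : ⟪V, V⟫ = 1 := by rw [real_inner_self_eq_norm_sq, hV]; norm_num
  have hηη : ⟪η, η⟫ = 1 := by rw [real_inner_self_eq_norm_sq, hη]; norm_num
  have hηV : ⟪η, V⟫ = 0 := by rw [real_inner_comm]; exact horth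
  have hpV : ⟪p, V⟫ = 1 / 2 := by
    rw [hp, inner_add_left, real_inner_smul_left, real_inner_smul_left, hVV, hηV]; ring
  have hpη : ⟪p, η⟫ = Real.sqrt 3 / 2 := by
    rw [hp, inner_add_left, real_inner_smul_left, real_inner_smul_left, horth, hηη]; ring
  have hpp : ⟪p, p⟫ = 1 := by
    nth_rewrite 2 [hp]
    rw [inner_add_right, real_inner_smul_right, real_inner_smul_right, hpV, hpη]
    linear_combination (1 / 4 : ℝ) * sqrt3
  -- `g` agrees with `mtwG V` away from `0`
  have hgG : ∀ q : EuclideanSpace ℝ (Fin n), q ≠ 0 → g q = mtwG V q := by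
    intro q hq
    rw [hg q hq, mtwG]
    have h1 : ‖q‖ ^ ((4 : ℝ) / 3) = ⟪q, q⟫ ^ ((2 : ℝ) / 3) := by
      rw [real_inner_self_eq_norm_sq, ← Real.rpow_natCast ‖q‖ 2,
        ← Real.rpow_mul (norm_nonneg q)]
      norm_num
    have h2 : ‖q‖ ^ (-(2 / 3 : ℝ)) = ⟪q, q⟫ ^ (-(1 / 3 : ℝ)) := by
      rw [real_inner_self_eq_norm_sq, ← Real.rpow_natCast ‖q‖ 2,
        ← Real.rpow_mul (norm_nonneg q)]
      norm_num
    rw [h1, h2]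
  -- `fderiv g` agrees with `mtwA V` away from `0`
  have hfd : ∀ q : EuclideanSpace ℝ (Fin n), q ≠ 0 → fderiv ℝ g q = mtwA V q := by
    intro q hq
    have hq' : ⟪q, q⟫ ≠ (0 : ℝ) := by
      rw [real_inner_self_eq_norm_sq]
      exact pow_ne_zero 2 (norm_ne_zero_iff.mpr hq)
    have hG := mtwG_hasFDerivAt V q hq'
    have hEq : g =ᶠ[nhds q] mtwG V := by
      filter_upwards [IsOpen.mem_nhds isOpen_compl_singleton hq] with x hx
      exact hgG x hx
    exact ((hG.congr_of_eventuallyEq hEq).fderiv)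
  have hp0 : p ≠ 0 := by
    intro h
    have : ⟪p, p⟫ = (0 : ℝ) := by rw [h]; simp
    rw [hpp] at this; norm_num at this
  have hpp' : ⟪p, p⟫ ≠ (0 : ℝ) := by rw [hpp]; norm_num
  -- derivative of `mtwA V` at `p`
  have hs := mtw_hasFDerivAt_inner_self p
  have ht := mtw_hasFDerivAt_inner_right V p
  have h1 : HasFDerivAt (fun x : EuclideanSpace ℝ (Fin n) => ⟪x, x⟫ ^ (-(1 / 3 : ℝ)))
      (((-(1 / 3 : ℝ)) * ⟪p, p⟫ ^ (-(1 / 3 : ℝ) - 1)) • ((2 : ℝ) • mtwInnerSL p)) p :=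
    hs.rpow_const (Or.inl hpp')
  have h2 : HasFDerivAt (fun x : EuclideanSpace ℝ (Fin n) => ⟪x, x⟫ ^ (-(4 / 3 : ℝ)))
      (((-(4 / 3 : ℝ)) * ⟪p, p⟫ ^ (-(4 / 3 : ℝ) - 1)) • ((2 : ℝ) • mtwInnerSL p)) p :=
    hs.rpow_const (Or.inl hpp')
  have h3 : HasFDerivAt (fun x : EuclideanSpace ℝ (Fin n) => ⟪x, V⟫ ^ 2)
      (⟪p, V⟫ • mtwInnerSL V + ⟪p, V⟫ • mtwInnerSL V) p := by
    simpa only [pow_two] using ht.fun_mul ht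
  have hα : HasFDerivAt (mtwAlpha V)
      (((2 : ℝ) ^ (-(1 / 3 : ℝ))) •
        (((4 / 3 : ℝ) • (((-(1 / 3 : ℝ)) * ⟪p, p⟫ ^ (-(1 / 3 : ℝ) - 1)) • ((2 : ℝ) • mtwInnerSL p))) +
          (((8 / 3 : ℝ) * ⟪p, p⟫ ^ (-(4 / 3 : ℝ))) • (⟪p, V⟫ • mtwInnerSL V + ⟪p, V⟫ • mtwInnerSL V) +
            (⟪p, V⟫ ^ 2) • ((8 / 3 : ℝ) • (((-(4 / 3 : ℝ)) * ⟪p, p⟫ ^ (-(4 / 3 : ℝ) - 1)) •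
              ((2 : ℝ) • mtwInnerSL p)))))) p := by
    exact ((h1.const_mul (4 / 3 : ℝ)).add ((h2.const_mul (8 / 3 : ℝ)).mul h3)).const_mul
      ((2 : ℝ) ^ (-(1 / 3 : ℝ)))
  have hβ : HasFDerivAt (mtwBeta V)
      (((2 : ℝ) ^ (-(1 / 3 : ℝ))) •
        (((-8 * ⟪p, p⟫ ^ (-(1 / 3 : ℝ))) • mtwInnerSL V) +
          ⟪p, V⟫ • ((-8 : ℝ) • (((-(1 / 3 : ℝ)) * ⟪p, p⟫ ^ (-(1 / 3 : ℝ) - 1)) •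
            ((2 : ℝ) • mtwInnerSL p))))) p := by
    exact ((h1.const_mul (-8 : ℝ)).mul ht).const_mul ((2 : ℝ) ^ (-(1 / 3 : ℝ)))
  have hA := (hα.fun_smul ((mtwInnerSL (F := EuclideanSpace ℝ (Fin n))).hasFDerivAt (x := p))).fun_add
    (hβ.fun_smul (hasFDerivAt_const (mtwInnerSL V) p))
  -- identify the second derivative
  have hout : fderiv ℝ (fun q => fderiv ℝ g q) p = fderiv ℝ (mtwA V) p := by
    apply Filter.EventuallyEq.fderiv_eq
    filter_upwards [IsOpen.mem_nhds isOpen_compl_singleton hp0] with x hx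
    exact hfd x hx
  rw [hout,
    show mtwA V = (fun x : EuclideanSpace ℝ (Fin n) =>
      mtwAlpha V x • mtwInnerSL x + mtwBeta V x • mtwInnerSL V) from rfl, hA.fderiv]
  simp only [ContinuousLinearMap.add_apply, ContinuousLinearMap.smul_apply,
    ContinuousLinearMap.smulRight_apply, mtwInnerSL_apply, smul_eq_mul, hpp, hpV, hpη, hηV, hηη,
    Real.one_rpow, mtwAlpha, mtwBeta, ContinuousLinearMap.zero_apply, Nat.cast_ofNat, pow_one,
    Real.rpow_natCast, horth]
  linear_combination (-(2 / 3) * (2 : ℝ) ^ (-(1 / 3 : ℝ))) * sqrt3
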